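/- For nonnegative integers h, e with h + 2e = n, let C(h, e) ⊆ M_n(ℝ) denote the linear span of the matrices B_1, ..., B_n given by B_i = E_{ii} for i ≤ h, B_{h+2j−1} = E_{h+2j−1, h+2j−1} + E_{h+2j, h+2j}, and B_{h+2j} = E_{h+2j, h+2j−1} − E_{h+2j−1, h+2j} for j = 1, ..., e (E_{kl} the elementary matrices). If h + 2e = h' + 2e' = n and there exists P ∈ GL(n, ℝ) such that P · C(h, e) · P^{−1} = C(h', e'), then h = h' and e = e'. (The numbers (h, e) in the normal form for nondegenerate linear ℝ^n-actions on ℝ^n are invariants, independent of the choice of coordinates.) -/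

import Mathlib

open scoped BigOperators

/-- The model matrices of the normal form with `h` hyperbolic components followed by
elbolic pairs (0-indexed): `B i = E_{ii}` for `i < h`, and for each pair `i = h+2j`,
`B_{h+2j} = E_{h+2j,h+2j} + E_{h+2j+1,h+2j+1}`,
`B_{h+2j+1} = E_{h+2j+1,h+2j} - E_{h+2j,h+2j+1}`. -/
noncomputable def modelB (n h : ℕ) (i : Fin n) : Matrix (Fin n) (Fin n) ℝ :=
  if (i : ℕ) < h then Matrix.single i i 1
  else if ((i : ℕ) - h) % 2 = 0 then
    (if hlt : (i : ℕ) + 1 < n then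
      Matrix.single i i 1 +
        Matrix.single (⟨(i : ℕ) + 1, hlt⟩ : Fin n) (⟨(i : ℕ) + 1, hlt⟩ : Fin n) 1
     else 0)
  else
    (if hpos : 0 < (i : ℕ) then
      Matrix.single i (⟨(i : ℕ) - 1, by omega⟩ : Fin n) 1 -
        Matrix.single (⟨(i : ℕ) - 1, by omega⟩ : Fin n) i 1
     else 0)

/-- `C(h,e) ⊆ Mₙ(ℝ)`: the linear span of the model matrices, i.e. the Cartan
subalgebra of gl(n,ℝ) corresponding to `h` hyperbolic and `e` elbolic components. -/
noncomputable def cartanC (n h : ℕ) : Submodule ℝ (Matrix (Fin n) (Fin n) ℝ) :=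
  Submodule.span ℝ (Set.range (modelB n h))

/-- The numbers (h,e) of the normal form are invariants: if the Cartan subalgebras
C(h,e) and C(h',e') with h+2e = h'+2e' = n are conjugate by some P ∈ GL(n,ℝ),
then h = h' and e = e'. -/


lemma modelB_lt_apply (n h : ℕ) (i : ℕ) (hi : i < n) (hih : i < h) (a b : Fin n) :
    modelB n h ⟨i, hi⟩ a b = if i = (a : ℕ) ∧ i = (b : ℕ) then (1 : ℝ) else 0 := by
  rw [modelB, if_pos (by simpa using hih)]
  simp [Matrix.single, Fin.ext_iff]

lemma modelB_even_apply (n h : ℕ) (i : ℕ) (hi : i < n) (hih : h ≤ i)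
    (hpar : (i - h) % 2 = 0) (hi1 : i + 1 < n) (a b : Fin n) :
    modelB n h ⟨i, hi⟩ a b =
      (if i = (a : ℕ) ∧ i = (b : ℕ) then (1 : ℝ) else 0) +
      (if i + 1 = (a : ℕ) ∧ i + 1 = (b : ℕ) then (1 : ℝ) else 0) := by
  rw [modelB, if_neg (by simp; omega), if_pos (by simpa using hpar), dif_pos (by simpa using hi1)]
  simp [Matrix.single, Fin.ext_iff]

lemma modelB_odd_apply (n h : ℕ) (i : ℕ) (hi : i < n) (hih : h ≤ i)
    (hpar : (i - h) % 2 = 1) (a b : Fin n) :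
    modelB n h ⟨i, hi⟩ a b =
      (if i = (a : ℕ) ∧ i - 1 = (b : ℕ) then (1 : ℝ) else 0) -
      (if i - 1 = (a : ℕ) ∧ i = (b : ℕ) then (1 : ℝ) else 0) := by
  have hpos : 0 < i := by omega
  rw [modelB, if_neg (by simp; omega), if_neg (by simp; omega), dif_pos (by simpa using hpos)]
  simp [Matrix.single, Fin.ext_iff]

open Matrix Module Submodule

-- entry evaluation as a linear map
def entryLM (n : ℕ) (a b : Fin n) : Matrix (Fin n) (Fin n) ℝ →ₗ[ℝ] ℝ where
  toFun M := M a b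
  map_add' := fun _ _ => rfl
  map_smul' := fun _ _ => rfl

@[simp] lemma entryLM_apply (n : ℕ) (a b : Fin n) (M) : entryLM n a b M = M a b := rfl

def symmSub (n : ℕ) : Submodule ℝ (Matrix (Fin n) (Fin n) ℝ) where
  carrier := {M | Mᵀ = M}
  add_mem' := fun {a b} ha hb => by
    simp only [Set.mem_setOf_eq] at *; rw [Matrix.transpose_add, ha, hb]
  zero_mem' := by simp
  smul_mem' := fun c M hM => by
    simp only [Set.mem_setOf_eq] at *; rw [Matrix.transpose_smul, hM]

def skewSub (n : ℕ) : Submodule ℝ (Matrix (Fin n) (Fin n) ℝ) where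
  carrier := {M | Mᵀ = -M}
  add_mem' := fun {a b} ha hb => by
    simp only [Set.mem_setOf_eq] at *; rw [Matrix.transpose_add, ha, hb]; abel
  zero_mem' := by simp
  smul_mem' := fun c M hM => by
    simp only [Set.mem_setOf_eq] at *; rw [Matrix.transpose_smul, hM, smul_neg]

lemma mem_symmSub {n M} : M ∈ symmSub n ↔ Mᵀ = M := Iff.rfl
lemma mem_skewSub {n M} : M ∈ skewSub n ↔ Mᵀ = -M := Iff.rfl

lemma exists_entry_ne_zero {n : ℕ} {M : Matrix (Fin n) (Fin n) ℝ} (hM : M ≠ 0) :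
    ∃ i j, M i j ≠ 0 := by
  by_contra hc
  push_neg at hc
  exact hM (by ext i j; simpa using hc i j)

lemma trace_sq_pos_of_symm {n : ℕ} {M : Matrix (Fin n) (Fin n) ℝ} (hs : Mᵀ = M) (hM : M ≠ 0) :
    0 < Matrix.trace (M * M) := by
  have key : Matrix.trace (M * M) = ∑ i, ∑ j, (M i j) ^ 2 := by
    rw [Matrix.trace]
    refine Finset.sum_congr rfl fun i _ => ?_
    rw [Matrix.diag_apply, Matrix.mul_apply]
    refine Finset.sum_congr rfl fun j _ => ?_
    have : M j i = M i j := by rw [← Matrix.transpose_apply M i j, hs]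
    rw [this, sq]
  rw [key]
  obtain ⟨i, j, hij⟩ := exists_entry_ne_zero hM
  refine Finset.sum_pos' (fun i _ => Finset.sum_nonneg fun j _ => sq_nonneg _)
    ⟨i, Finset.mem_univ i, Finset.sum_pos' (fun j _ => sq_nonneg _)
      ⟨j, Finset.mem_univ j, by positivity⟩⟩

lemma trace_sq_neg_of_skew {n : ℕ} {M : Matrix (Fin n) (Fin n) ℝ} (hs : Mᵀ = -M) (hM : M ≠ 0) :
    Matrix.trace (M * M) < 0 := by
  have key : Matrix.trace (M * M) = -∑ i, ∑ j, (M i j) ^ 2 := by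
    rw [Matrix.trace, ← Finset.sum_neg_distrib]
    refine Finset.sum_congr rfl fun i _ => ?_
    rw [Matrix.diag_apply, Matrix.mul_apply, ← Finset.sum_neg_distrib]
    refine Finset.sum_congr rfl fun j _ => ?_
    have : M j i = -M i j := by
      have := congrFun (congrFun hs i) j
      simpa [Matrix.transpose_apply] using this
    rw [this, sq]; ring
  rw [key, neg_lt, neg_zero]
  obtain ⟨i, j, hij⟩ := exists_entry_ne_zero hM
  refine Finset.sum_pos' (fun i _ => Finset.sum_nonneg fun j _ => sq_nonneg _)
    ⟨i, Finset.mem_univ i, Finset.sum_pos' (fun j _ => sq_nonneg _)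
      ⟨j, Finset.mem_univ j, by positivity⟩⟩

lemma trace_conj_sq {n : ℕ} (P M : Matrix (Fin n) (Fin n) ℝ) (hP : IsUnit P) :
    Matrix.trace ((P * M * P⁻¹) * (P * M * P⁻¹)) = Matrix.trace (M * M) := by
  have hd : IsUnit P.det := (Matrix.isUnit_iff_isUnit_det P).mp hP
  have h1 : P⁻¹ * P = 1 := Matrix.nonsing_inv_mul P hd
  have h2 : (P * M * P⁻¹) * (P * M * P⁻¹) = P * (M * M) * P⁻¹ := by
    rw [show P * M * P⁻¹ * (P * M * P⁻¹) = P * M * (P⁻¹ * P) * M * P⁻¹ by noncomm_ring, h1]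
    noncomm_ring
  rw [h2, Matrix.trace_mul_cycle, ← Matrix.mul_assoc, h1, Matrix.one_mul]

-- abstract dual-family lemma
lemma card_le_finrank_of_dual {V : Type*} [AddCommGroup V] [Module ℝ V] [FiniteDimensional ℝ V]
    (p : Submodule ℝ V) (m : ℕ) (F : Fin m → V) (hF : ∀ i, F i ∈ p)
    (K : V →ₗ[ℝ] (Fin m → ℝ)) (hK : ∀ i, K (F i) = Pi.single i 1) :
    m ≤ Module.finrank ℝ p := by
  have hsingle : LinearIndependent ℝ (fun i : Fin m => (Pi.single i 1 : Fin m → ℝ)) := by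
    have := (Pi.basisFun ℝ (Fin m)).linearIndependent
    rwa [show ⇑(Pi.basisFun ℝ (Fin m)) = fun i => Pi.single i 1 from funext fun i => by simp]
      at this
  have hli : LinearIndependent ℝ (fun i => (⟨F i, hF i⟩ : p)) := by
    apply LinearIndependent.of_comp (K ∘ₗ p.subtype)
    convert hsingle using 1
    funext i
    simp [hK i]
  simpa using hli.fintype_card_le_finrank

open Matrix Module Submodule

lemma modelB_mem_cartanC (n h : ℕ) (v : Fin n) : modelB n h v ∈ cartanC n h :=
  Submodule.subset_span (Set.mem_range_self v)

def sigmaIdx (h i : ℕ) : ℕ := if i < h then i else 2 * i - h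

lemma sigmaIdx_lt {n h e : ℕ} (hhe : h + 2 * e = n) {i : ℕ} (hi : i < h + e) :
    sigmaIdx h i < n := by unfold sigmaIdx; split <;> omega

lemma sigmaIdx_cases (h i : ℕ) :
    (i < h ∧ sigmaIdx h i = i) ∨ (h ≤ i ∧ sigmaIdx h i = 2 * i - h) := by
  unfold sigmaIdx; split <;> [left; right] <;> omega

-- the symmetric family
lemma modelB_sigma_symm {n h e : ℕ} (hhe : h + 2 * e = n) {i : ℕ} (hi : i < h + e) :
    (modelB n h ⟨sigmaIdx h i, sigmaIdx_lt hhe hi⟩)ᵀ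
      = modelB n h ⟨sigmaIdx h i, sigmaIdx_lt hhe hi⟩ := by
  ext a b
  rw [Matrix.transpose_apply]
  rcases sigmaIdx_cases h i with ⟨hc, hs⟩ | ⟨hc, hs⟩
  · rw [modelB_lt_apply n h _ _ (by omega) b a, modelB_lt_apply n h _ _ (by omega) a b]
    split_ifs <;> first | omega | norm_num
  · rw [modelB_even_apply n h _ _ (by omega) (by omega) (by omega) b a,
      modelB_even_apply n h _ _ (by omega) (by omega) (by omega) a b]
    split_ifs <;> first | omega | norm_num

lemma modelB_sigma_eval {n h e : ℕ} (hhe : h + 2 * e = n) {i i' : ℕ}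
    (hi : i < h + e) (hi' : i' < h + e) :
    modelB n h ⟨sigmaIdx h i, sigmaIdx_lt hhe hi⟩
        ⟨sigmaIdx h i', sigmaIdx_lt hhe hi'⟩ ⟨sigmaIdx h i', sigmaIdx_lt hhe hi'⟩
      = if i' = i then (1 : ℝ) else 0 := by
  rcases sigmaIdx_cases h i with ⟨hc, hs⟩ | ⟨hc, hs⟩ <;>
    rcases sigmaIdx_cases h i' with ⟨hc', hs'⟩ | ⟨hc', hs'⟩
  · rw [modelB_lt_apply n h _ _ (by omega)]
    simp only [Fin.val_mk]
    split_ifs <;> first | omega | norm_num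
  · rw [modelB_lt_apply n h _ _ (by omega)]
    simp only [Fin.val_mk]
    split_ifs <;> first | omega | norm_num
  · rw [modelB_even_apply n h _ _ (by omega) (by omega) (by omega)]
    simp only [Fin.val_mk]
    split_ifs <;> first | omega | norm_num
  · rw [modelB_even_apply n h _ _ (by omega) (by omega) (by omega)]
    simp only [Fin.val_mk]
    split_ifs <;> first | omega | norm_num

-- the skew family
lemma modelB_skew_skew {n h e : ℕ} (hhe : h + 2 * e = n) {j : ℕ} (hj : j < e) :
    (modelB n h ⟨h + 2 * j + 1, by omega⟩)ᵀ = -(modelB n h ⟨h + 2 * j + 1, by omega⟩) := by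
  ext a b
  rw [Matrix.transpose_apply, Matrix.neg_apply,
    modelB_odd_apply n h _ _ (by omega) (by omega) b a,
    modelB_odd_apply n h _ _ (by omega) (by omega) a b]
  split_ifs <;> first | omega | norm_num

lemma modelB_skew_eval {n h e : ℕ} (hhe : h + 2 * e = n) {j j' : ℕ}
    (hj : j < e) (hj' : j' < e) :
    modelB n h ⟨h + 2 * j + 1, by omega⟩
        ⟨h + 2 * j' + 1, by omega⟩ ⟨h + 2 * j', by omega⟩
      = if j' = j then (1 : ℝ) else 0 := by
  rw [modelB_odd_apply n h _ _ (by omega) (by omega)]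
  simp only [Fin.val_mk]
  split_ifs <;> first | omega | norm_num

noncomputable def conjLM {n : ℕ} (P : Matrix (Fin n) (Fin n) ℝ) :
    Matrix (Fin n) (Fin n) ℝ →ₗ[ℝ] Matrix (Fin n) (Fin n) ℝ where
  toFun M := P * M * P⁻¹
  map_add' := fun A B => by noncomm_ring
  map_smul' := fun c M => by simp [Matrix.mul_smul, Matrix.smul_mul]

@[simp] lemma conjLM_apply {n : ℕ} (P M : Matrix (Fin n) (Fin n) ℝ) :
    conjLM P M = P * M * P⁻¹ := rfl

lemma conjLM_inv_conjLM {n : ℕ} (P : Matrix (Fin n) (Fin n) ℝ) (hP : IsUnit P)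
    (M : Matrix (Fin n) (Fin n) ℝ) : conjLM P⁻¹ (conjLM P M) = M := by
  have hd : IsUnit P.det := (Matrix.isUnit_iff_isUnit_det P).mp hP
  have h1 : P⁻¹ * P = 1 := Matrix.nonsing_inv_mul P hd
  simp only [conjLM_apply, Matrix.nonsing_inv_nonsing_inv P hd]
  rw [show P⁻¹ * (P * M * P⁻¹) * P = (P⁻¹ * P) * M * (P⁻¹ * P) by noncomm_ring, h1]
  noncomm_ring

lemma e_le_aux (n h e h' e' : ℕ) (hhe : h + 2 * e = n) (hh'e' : h' + 2 * e' = n)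
    (P : Matrix (Fin n) (Fin n) ℝ) (hP : IsUnit P)
    (hconj : (fun M => P * M * P⁻¹) '' (cartanC n h : Set (Matrix (Fin n) (Fin n) ℝ)) =
      (cartanC n h' : Set (Matrix (Fin n) (Fin n) ℝ))) :
    e ≤ e' := by
  classical
  set Neg : Submodule ℝ (Matrix (Fin n) (Fin n) ℝ) :=
    (cartanC n h ⊓ skewSub n).map (conjLM P) with hNegdef
  set Pos : Submodule ℝ (Matrix (Fin n) (Fin n) ℝ) := cartanC n h' ⊓ symmSub n with hPosdef
  have hNegle : Neg ≤ cartanC n h' := by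
    intro M hM
    obtain ⟨N, hN, rfl⟩ := hM
    have hmem : conjLM P N ∈ (fun M => P * M * P⁻¹) ''
        (cartanC n h : Set (Matrix (Fin n) (Fin n) ℝ)) :=
      ⟨N, (Submodule.mem_inf.mp hN).1, rfl⟩
    rw [hconj] at hmem
    exact hmem
  have hNegTr : ∀ M ∈ Neg, M ≠ 0 → Matrix.trace (M * M) < 0 := by
    intro M hM hM0
    obtain ⟨N, hN, rfl⟩ := hM
    have hN0 : N ≠ 0 := by rintro rfl; simp at hM0
    have hsk := trace_sq_neg_of_skew ((Submodule.mem_inf.mp hN).2) hN0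
    simpa only [conjLM_apply, trace_conj_sq P N hP] using hsk
  have hPosTr : ∀ M ∈ Pos, M ≠ 0 → 0 < Matrix.trace (M * M) := fun M hM h0 =>
    trace_sq_pos_of_symm (Submodule.mem_inf.mp hM).2 h0
  have hdisj : Neg ⊓ Pos = ⊥ := by
    rw [Submodule.eq_bot_iff]
    intro M hM
    by_contra h0
    exact absurd (hPosTr M (Submodule.mem_inf.mp hM).2 h0)
      (not_lt.mpr (le_of_lt (hNegTr M (Submodule.mem_inf.mp hM).1 h0)))
  have hNegRank : e ≤ finrank ℝ Neg := by
    apply card_le_finrank_of_dual Neg e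
      (fun j => conjLM P (modelB n h ⟨h + 2 * (j : ℕ) + 1, by omega⟩))
      (fun j => Submodule.mem_map_of_mem
        (Submodule.mem_inf.mpr ⟨modelB_mem_cartanC _ _ _, modelB_skew_skew hhe j.2⟩))
      ((LinearMap.pi (fun j : Fin e =>
          entryLM n ⟨h + 2 * (j : ℕ) + 1, by omega⟩ ⟨h + 2 * (j : ℕ), by omega⟩)) ∘ₗ
        conjLM P⁻¹)
    intro j
    funext j'
    simp only [LinearMap.comp_apply, conjLM_inv_conjLM P hP, LinearMap.pi_apply, entryLM_apply]
    rw [modelB_skew_eval hhe j.2 j'.2, Pi.single_apply]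
    simp [Fin.ext_iff]
  have hPosRank : h' + e' ≤ finrank ℝ Pos := by
    apply card_le_finrank_of_dual Pos (h' + e')
      (fun i => modelB n h' ⟨sigmaIdx h' ↑i, sigmaIdx_lt hh'e' i.2⟩)
      (fun i => Submodule.mem_inf.mpr ⟨modelB_mem_cartanC _ _ _, modelB_sigma_symm hh'e' i.2⟩)
      (LinearMap.pi (fun i : Fin (h' + e') =>
        entryLM n ⟨sigmaIdx h' ↑i, sigmaIdx_lt hh'e' i.2⟩
          ⟨sigmaIdx h' ↑i, sigmaIdx_lt hh'e' i.2⟩))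
    intro i
    funext i'
    simp only [LinearMap.pi_apply, entryLM_apply]
    rw [modelB_sigma_eval hh'e' i.2 i'.2, Pi.single_apply]
    simp [Fin.ext_iff]
  have hC' : finrank ℝ (cartanC n h') ≤ n := by
    have hr := finrank_range_le_card (R := ℝ) (modelB n h')
    rw [Set.finrank] at hr
    exact hr.trans (by rw [Fintype.card_eq_nat_card, Nat.card_eq_fintype_card, Fintype.card_fin])
  have hsum := Submodule.finrank_sup_add_finrank_inf_eq Neg Pos
  rw [hdisj, finrank_bot, add_zero] at hsum
  have hle : finrank ℝ ↥(Neg ⊔ Pos) ≤ finrank ℝ (cartanC n h') :=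
    Submodule.finrank_mono (sup_le hNegle inf_le_left)
  have hmain : e + (h' + e') ≤ n := by
    calc e + (h' + e') ≤ finrank ℝ Neg + finrank ℝ Pos := add_le_add hNegRank hPosRank
      _ = finrank ℝ ↥(Neg ⊔ Pos) := hsum.symm
      _ ≤ finrank ℝ (cartanC n h') := hle
      _ ≤ n := hC'
  omega


theorem normal_form_invariants
    (n h e h' e' : ℕ) (hhe : h + 2 * e = n) (hh'e' : h' + 2 * e' = n)
    (P : Matrix (Fin n) (Fin n) ℝ) (hP : IsUnit P)
    (hconj : (fun M => P * M * P⁻¹) '' (cartanC n h : Set (Matrix (Fin n) (Fin n) ℝ)) =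
      (cartanC n h' : Set (Matrix (Fin n) (Fin n) ℝ))) :
    h = h' ∧ e = e' := by
  have h1 : e ≤ e' := e_le_aux n h e h' e' hhe hh'e' P hP hconj
  have hd : IsUnit P.det := (Matrix.isUnit_iff_isUnit_det P).mp hP
  have hPinv : IsUnit P⁻¹ := Matrix.isUnit_nonsing_inv_iff.mpr hP
  have hconj' : (fun M => P⁻¹ * M * P⁻¹⁻¹) ''
      (cartanC n h' : Set (Matrix (Fin n) (Fin n) ℝ)) =
      (cartanC n h : Set (Matrix (Fin n) (Fin n) ℝ)) := by
    rw [Matrix.nonsing_inv_nonsing_inv P hd, ← hconj, ← Set.image_comp]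
    have hid : ((fun M => P⁻¹ * M * P) ∘
        (fun M : Matrix (Fin n) (Fin n) ℝ => P * M * P⁻¹)) = id := by
      funext M
      simp only [Function.comp_apply, id_eq]
      rw [show P⁻¹ * (P * M * P⁻¹) * P = (P⁻¹ * P) * M * (P⁻¹ * P) by noncomm_ring,
        Matrix.nonsing_inv_mul P hd]
      noncomm_ring
    rw [hid, Set.image_id]
  have h2 : e' ≤ e := e_le_aux n h' e' h e hh'e' hhe P⁻¹ hPinv hconj'
  exact ⟨by omega, le_antisymm h1 h2⟩
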